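/- arXiv:0801.0695 — 4 statements merged into one kernel-verified Lean document; each statement's English description precedes it below -/
import Mathlib

section
/- Let X be a normed space and let (x_n)_{n≥1} be a sequence in X. Set x*_0 = 0 and x*_n = max_{1≤m≤n} ‖x_m‖ for n ≥ 1, and define v_n = x_n if ‖x_n‖ > 2 x*_{n−1} and v_n = 0 otherwise. Then Σ_{n≥1} ‖v_n‖ ≤ 2 sup_{n≥1} ‖x_n‖ (in particular, if sup_n ‖x_n‖ < ∞ the sum converges). -/
open scoped ENNReal NNReal Classical

noncomputable section

/-- Let `X` be a normed space and `(x n)_{n ≥ 1}` a sequence in `X`.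
With `x*_0 = 0`, `x*_n = max_{1 ≤ m ≤ n} ‖x m‖`, and `v n = x n` when `‖x n‖ > 2 x*_{n-1}`
and `v n = 0` otherwise, one has `Σ_{n ≥ 1} ‖v n‖ ≤ 2 sup_{n ≥ 1} ‖x n‖`
(an inequality in `[0, ∞]`, so in particular the sum converges when the sup is finite). -/
theorem davis_large_jump_sum (X : Type) [NormedAddCommGroup X] [NormedSpace ℝ X]
    (x v : ℕ → X)
    (hv : ∀ n, 1 ≤ n →
      v n = if 2 * ((((Finset.Icc 1 (n - 1)).sup fun m => ‖x m‖₊) : ℝ≥0) : ℝ) < ‖x n‖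
        then x n else 0) :
    (∑' n : ℕ, if 1 ≤ n then (‖v n‖₊ : ℝ≥0∞) else 0)
      ≤ 2 * ⨆ n, ⨆ (_ : 1 ≤ n), (‖x n‖₊ : ℝ≥0∞) := by
  set M : ℕ → ℝ≥0 := fun n => (Finset.Icc 1 n).sup fun m => ‖x m‖₊ with hM
  set f : ℕ → ℝ≥0∞ := fun n => if 1 ≤ n then (‖v n‖₊ : ℝ≥0∞) else 0 with hf
  have key : ∀ N, ∑ i ∈ Finset.range (N + 1), f i ≤ 2 * (M N : ℝ≥0∞) := by
    intro N
    induction N with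
    | zero => simp [hf]
    | succ N ih =>
      rw [Finset.sum_range_succ]
      have h1 : f (N + 1) = if 2 * ((M N : ℝ≥0) : ℝ) < ‖x (N + 1)‖
          then (‖x (N+1)‖₊ : ℝ≥0∞) else 0 := by
        simp only [hf, if_pos (Nat.le_add_left 1 N), hv (N+1) (Nat.le_add_left 1 N), hM,
          Nat.add_sub_cancel]
        split_ifs <;> simp
      by_cases hc : 2 * ((M N : ℝ≥0) : ℝ) < ‖x (N + 1)‖
      · rw [h1, if_pos hc]
        have hMx : (‖x (N+1)‖₊ : ℝ≥0∞) ≤ (M (N+1) : ℝ≥0∞) := by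
          refine ENNReal.coe_le_coe.2 ?_
          simp only [hM]
          exact Finset.le_sup (f := fun m => ‖x m‖₊) (by simp : N + 1 ∈ Finset.Icc 1 (N+1))
        have h2 : 2 * (M N : ℝ≥0∞) ≤ (‖x (N+1)‖₊ : ℝ≥0∞) := by
          have : (2 : ℝ) * (M N : ℝ) ≤ ((‖x (N+1)‖₊ : ℝ≥0) : ℝ) := le_of_lt (by
            simpa [coe_nnnorm] using hc)
          have h3 : (2 * M N : ℝ≥0) ≤ ‖x (N+1)‖₊ := by
            rw [← NNReal.coe_le_coe]; push_cast; exact this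
          calc 2 * (M N : ℝ≥0∞) = ((2 * M N : ℝ≥0) : ℝ≥0∞) := by push_cast; ring
          _ ≤ _ := ENNReal.coe_le_coe.2 h3
        calc ∑ i ∈ Finset.range (N + 1), f i + (‖x (N+1)‖₊ : ℝ≥0∞)
            ≤ 2 * (M N : ℝ≥0∞) + (‖x (N+1)‖₊ : ℝ≥0∞) := add_le_add_left ih _
          _ ≤ (‖x (N+1)‖₊ : ℝ≥0∞) + (‖x (N+1)‖₊ : ℝ≥0∞) := add_le_add_left h2 _
          _ = 2 * (‖x (N+1)‖₊ : ℝ≥0∞) := (two_mul _).symm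
          _ ≤ 2 * (M (N+1) : ℝ≥0∞) := by gcongr
      · rw [h1, if_neg hc, add_zero]
        refine ih.trans ?_
        gcongr
        simp only [hM]
        exact Finset.sup_mono (Finset.Icc_subset_Icc_right (Nat.le_succ N))
  have hsup : ∀ N, (M N : ℝ≥0∞) ≤ ⨆ n, ⨆ (_ : 1 ≤ n), (‖x n‖₊ : ℝ≥0∞) := by
    intro N
    rw [show ((M N : ℝ≥0) : ℝ≥0∞) = (Finset.Icc 1 N).sup fun m => (‖x m‖₊ : ℝ≥0∞) from
      ENNReal.coe_finset_sup.symm ▸ rfl]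
    · refine Finset.sup_le fun m hm => ?_
      have h1m : 1 ≤ m := (Finset.mem_Icc.1 hm).1
      exact le_iSup₂ (f := fun n (_ : 1 ≤ n) => (‖x n‖₊ : ℝ≥0∞)) m h1m
  refine ENNReal.tsum_le_of_sum_range_le fun N => ?_
  cases N with
  | zero => simp
  | succ N => exact (key N).trans (by gcongr; exact hsup N)
end
end

section
/- Let X be a Banach space, q ∈ [1, ∞), and let (d_n)_{n≥1} be a martingale difference sequence in L^q(Ω; X) with d_n = 0 for n > N. Set d*_0 = 0 and d*_n = max_{1≤m≤n} ‖d_m‖, and define v_n = d_n 1_{{‖d_n‖ > 2 d*_{n−1}}}. Then the martingale f^{(2)} with differences v_n − E(v_n | F_{n−1}) satisfies ‖ sup_{n≥1} ‖f^{(2)}_n‖ ‖_{L^q} ≤ (2 + 2q) ‖ d* ‖_{L^q}, where f^{(2)}_n = Σ_{k=1}^n (v_k − E(v_k | F_{k−1})) and d* = sup_{n≥1} ‖d_n‖. -/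
open MeasureTheory ProbabilityTheory
open scoped ENNReal NNReal Classical

noncomputable section

-- ### Auxiliary lemmas ###
/-- A finite sup of measurable `ℝ≥0`-valued functions is measurable. -/
lemma my_measurable_finset_sup {Ω : Type} {m : MeasurableSpace Ω} (s : Finset ℕ)
    {f : ℕ → Ω → ℝ≥0} (h : ∀ i ∈ s, Measurable (f i)) :
    Measurable fun ω => s.sup fun i => f i ω := by
  classical
  induction s using Finset.induction_on with
  | empty => simp only [Finset.sup_empty]; exact measurable_const
  | insert _ _ hnot ih =>
      rename_i a s
      simp only [Finset.sup_insert]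
      exact (h a (Finset.mem_insert_self a s)).sup
        (ih fun i hi => h i (Finset.mem_insert_of_mem hi))


variable {α : Type*} {X : Type*} [NormedAddCommGroup X] [NormedSpace ℝ X] [CompleteSpace X]
  {m m0 : MeasurableSpace α} {μ : Measure α}

/-- L¹ contraction property of the conditional expectation, Banach-valued. -/
lemma my_integral_norm_condexp_le (hm : m ≤ m0) [SigmaFinite (μ.trim hm)]
    {f : α → X} (hf : Integrable f μ) :
    ∫ ω, ‖(μ[f|m]) ω‖ ∂μ ≤ ∫ ω, ‖f ω‖ ∂μ := by
  have h1 : μ[f|m] =ᵐ[μ] condExpL1 hm μ f := condExp_ae_eq_condExpL1 hm f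
  have h2 : ∫ ω, ‖(μ[f|m]) ω‖ ∂μ = ∫ ω, ‖condExpL1 hm μ f ω‖ ∂μ :=
    integral_congr_ae (by filter_upwards [h1] with ω hω; rw [hω])
  rw [h2, condExpL1_eq hf]
  have h3 : ‖condExpL1CLM X hm μ (hf.toL1 f)‖ ≤ 1 * ‖hf.toL1 f‖ :=
    L1.norm_setToL1_le_mul_norm (dominatedFinMeasAdditive_condExpInd X hm μ) zero_le_one _
  rw [one_mul] at h3
  calc ∫ ω, ‖condExpL1CLM X hm μ (hf.toL1 f) ω‖ ∂μ
      = ‖condExpL1CLM X hm μ (hf.toL1 f)‖ := (L1.norm_eq_integral_norm _).symm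
    _ ≤ ‖hf.toL1 f‖ := h3
    _ = ∫ ω, ‖(hf.toL1 f : α → X) ω‖ ∂μ := L1.norm_eq_integral_norm _
    _ = ∫ ω, ‖f ω‖ ∂μ := integral_congr_ae (by filter_upwards [hf.coeFn_toL1] with ω hω; rw [hω])

/-- Conditional Jensen for the norm, Banach-valued. -/
lemma my_norm_condexp_le (hm : m ≤ m0) [SigmaFinite (μ.trim hm)]
    {f : α → X} (hf : Integrable f μ) :
    (fun ω => ‖(μ[f|m]) ω‖) ≤ᵐ[μ] μ[fun ω => ‖f ω‖|m] := by
  set g : α → ℝ := fun ω => ‖(μ[f|m]) ω‖ with hg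
  set h : α → ℝ := μ[fun ω => ‖f ω‖|m] with hh
  have hgm : StronglyMeasurable[m] g := stronglyMeasurable_condExp.norm
  have hhm : StronglyMeasurable[m] h := stronglyMeasurable_condExp
  have hgint : Integrable g μ := integrable_condExp.norm
  have hhint : Integrable h μ := integrable_condExp
  have key : ∀ s, MeasurableSet[m] s → (∫ ω in s, g ω ∂μ) ≤ ∫ ω in s, h ω ∂μ := by
    intro s hs
    have hrhs : ∫ ω in s, h ω ∂μ = ∫ ω in s, ‖f ω‖ ∂μ := setIntegral_condExp hm hf.norm hs
    have hlhs : ∫ ω in s, g ω ∂μ ≤ ∫ ω in s, ‖f ω‖ ∂μ := by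
      have e1 : ∫ ω in s, g ω ∂μ = ∫ ω, ‖(s.indicator (μ[f|m])) ω‖ ∂μ := by
        rw [← integral_indicator (hm s hs)]
        congr 1
        funext ω
        rw [norm_indicator_eq_indicator_norm]
      have e2 : ∫ ω, ‖(s.indicator (μ[f|m])) ω‖ ∂μ = ∫ ω, ‖(μ[s.indicator f|m]) ω‖ ∂μ :=
        integral_congr_ae (by filter_upwards [condExp_indicator hf hs] with ω hω; rw [hω])
      have e3 : ∫ ω, ‖(μ[s.indicator f|m]) ω‖ ∂μ ≤ ∫ ω, ‖(s.indicator f) ω‖ ∂μ :=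
        my_integral_norm_condexp_le hm (hf.indicator (hm s hs))
      have e4 : ∫ ω, ‖(s.indicator f) ω‖ ∂μ = ∫ ω in s, ‖f ω‖ ∂μ := by
        rw [← integral_indicator (hm s hs)]
        congr 1
        funext ω
        rw [norm_indicator_eq_indicator_norm]
      rw [e1, e2]
      exact e3.trans_eq e4
    exact hlhs.trans_eq hrhs.symm
  have htrim : g ≤ᵐ[μ.trim hm] h := by
    refine ae_le_of_forall_setIntegral_le (hgint.trim hm hgm) (hhint.trim hm hhm) ?_
    intro s hs _
    rw [← setIntegral_trim hm hgm hs, ← setIntegral_trim hm hhm hs]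
    exact key s hs
  exact ae_le_of_ae_le_trim htrim

lemma my_telescope (g : ℕ → ℝ) (n : ℕ) :
    ∑ k ∈ Finset.Icc 1 n, (g k - g (k - 1)) = g n - g 0 := by
  induction n with
  | zero => simp
  | succ n ih =>
      rw [← Finset.Ico_add_one_right_eq_Icc, Finset.sum_Ico_succ_top (by omega), Finset.Ico_add_one_right_eq_Icc, ih]
      simp only [Nat.add_sub_cancel]
      ring

lemma my_rpow_tangent {q : ℝ} (hq : 1 ≤ q) {x y : ℝ} (hy : 0 ≤ y) (hxy : y ≤ x) :
    x ^ q - y ^ q ≤ q * x ^ (q - 1) * (x - y) := by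
  rcases eq_or_lt_of_le hxy with rfl | hlt
  · simp
  have hx : 0 ≤ x := hy.trans hxy
  have hderiv : ∀ z : ℝ, HasDerivAt (fun t : ℝ => t ^ q) (q * z ^ (q - 1)) z := by
    intro z
    exact Real.hasDerivAt_rpow_const (Or.inr hq)
  obtain ⟨c, hc, hceq⟩ := exists_hasDerivAt_eq_slope (fun t : ℝ => t ^ q)
    (fun z => q * z ^ (q - 1)) hlt
    (fun z _ => (hderiv z).continuousAt.continuousWithinAt)
    (fun z _ => hderiv z)
  have hcx : c ^ (q - 1) ≤ x ^ (q - 1) :=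
    Real.rpow_le_rpow (hy.trans hc.1.le) hc.2.le (by linarith)
  have hxylt : 0 < x - y := by linarith
  have h1 : x ^ q - y ^ q = q * c ^ (q - 1) * (x - y) := by
    field_simp at hceq
    linarith [hceq]
  rw [h1]
  have : q * c ^ (q - 1) ≤ q * x ^ (q - 1) :=
    mul_le_mul_of_nonneg_left hcx (by linarith)
  exact mul_le_mul_of_nonneg_right this hxylt.le

lemma my_min_sub_min_le {x y t : ℝ} (hxy : y ≤ x) : min x t - min y t ≤ x - y := by
  rcases le_total x t with h | h
  · rw [min_eq_left h, min_eq_left (hxy.trans h)]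
  · rcases le_total y t with h2 | h2
    · rw [min_eq_right h, min_eq_left h2]; linarith
    · rw [min_eq_right h, min_eq_right h2]; linarith

lemma my_sum_Icc_one (g : ℕ → ℝ) (N : ℕ) :
    ∑ k ∈ Finset.Icc 1 N, g k = ∑ m ∈ Finset.range N, g (m + 1) := by
  rw [← Finset.Ico_add_one_right_eq_Icc, Finset.sum_Ico_eq_sum_range]
  simp [add_comm]

lemma my_ofReal_max (x : ℝ) : ENNReal.ofReal (max x 0) = ENNReal.ofReal x := by
  rcases le_total x 0 with h | h
  · rw [max_eq_right h, ENNReal.ofReal_zero, eq_comm, ENNReal.ofReal_eq_zero]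
    exact h
  · rw [max_eq_left h]

/-- Dual predictable projection (Garsia) inequality. -/
lemma my_garsia {Ω : Type} {m0 : MeasurableSpace Ω} (μ : Measure Ω) [IsProbabilityMeasure μ]
    (ℱ : MeasureTheory.Filtration ℕ m0) {q : ℝ} (hq : 1 ≤ q) (N : ℕ) (a : ℕ → Ω → ℝ)
    (ha_meas : ∀ k, Measurable (a k))
    (ha_int : ∀ k, Integrable (a k) μ)
    (ha_nonneg : ∀ k ω, 0 ≤ a k ω) :
    (∫⁻ ω, (ENNReal.ofReal (∑ k ∈ Finset.Icc 1 N, (μ[a k|ℱ (k - 1)]) ω)) ^ q ∂μ) ^ (1 / q)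
      ≤ ENNReal.ofReal q *
        (∫⁻ ω, (ENNReal.ofReal (∑ k ∈ Finset.Icc 1 N, a k ω)) ^ q ∂μ) ^ (1 / q) := by
  have hq0 : (0:ℝ) < q := lt_of_lt_of_le one_pos hq
  set c : ℕ → Ω → ℝ := fun k => μ[a k|ℱ (k - 1)] with hc
  set B : ℕ → Ω → ℝ := fun n ω => ∑ k ∈ Finset.Icc 1 n, c k ω with hB
  set A : Ω → ℝ := fun ω => ∑ k ∈ Finset.Icc 1 N, a k ω with hA
  have hc_meas : ∀ k, Measurable (c k) := fun k =>
    (stronglyMeasurable_condExp.mono (ℱ.le _)).measurable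
  have hc_int : ∀ k, Integrable (c k) μ := fun k => integrable_condExp
  have hc_nonneg : ∀ᵐ ω ∂μ, ∀ k, 0 ≤ c k ω := by
    rw [ae_all_iff]
    exact fun k => condExp_nonneg (Filter.Eventually.of_forall (ha_nonneg k))
  have hB_meas : ∀ n, Measurable (B n) := fun n => Finset.measurable_sum _ fun k _ => hc_meas k
  have hA_nonneg : ∀ ω, 0 ≤ A ω := fun ω => Finset.sum_nonneg fun k _ => ha_nonneg k ω
  have hA_int : Integrable A μ := integrable_finset_sum _ fun k _ => ha_int k
  have hA_meas : Measurable A := Finset.measurable_sum _ fun k _ => ha_meas k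
  rcases eq_or_lt_of_le hq with hq1 | hq1
  -- case q = 1
  · subst hq1
    simp only [ENNReal.rpow_one, one_div_one, ENNReal.ofReal_one, one_mul]
    have hBint : Integrable (B N) μ := integrable_finset_sum _ fun k _ => hc_int k
    have hBnn : 0 ≤ᵐ[μ] B N := by
      filter_upwards [hc_nonneg] with ω hω
      exact Finset.sum_nonneg fun k _ => hω k
    rw [← ofReal_integral_eq_lintegral_ofReal hBint hBnn,
      ← ofReal_integral_eq_lintegral_ofReal hA_int (Filter.Eventually.of_forall hA_nonneg)]
    have heq : ∫ ω, B N ω ∂μ = ∫ ω, A ω ∂μ := by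
      rw [hB, hA]
      simp only
      rw [integral_finset_sum _ fun k _ => hc_int k, integral_finset_sum _ fun k _ => ha_int k]
      exact Finset.sum_congr rfl fun k _ => integral_condExp (ℱ.le (k - 1))
    rw [heq]
  -- case 1 < q
  · have hqr : q.HolderConjugate (Real.conjExponent q) := Real.HolderConjugate.conjExponent hq1
    set r : ℝ := Real.conjExponent q with hr
    have hq1' : (0:ℝ) < q - 1 := by linarith
    have hrpos : 0 < r := hqr.symm.pos
    have hq1r : (q - 1) * r = q := by
      rw [hr, Real.conjExponent]
      field_simp
    set α : ℝ≥0∞ := ∫⁻ ω, (ENNReal.ofReal (A ω)) ^ q ∂μ with hα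
    have hcont : Continuous fun z : ℝ => z ^ (q - 1) := by
      rw [continuous_iff_continuousAt]
      exact fun z => Real.continuousAt_rpow_const z (q - 1) (Or.inr hq1'.le)
    have hcontq : Continuous fun z : ℝ => z ^ q := by
      rw [continuous_iff_continuousAt]
      exact fun z => Real.continuousAt_rpow_const z q (Or.inr hq0.le)
    have key : ∀ t : ℕ,
        (∫⁻ ω, (ENNReal.ofReal (min (max (B N ω) 0) (t:ℝ))) ^ q ∂μ) ^ (1/q)
          ≤ ENNReal.ofReal q * α ^ (1/q) := by
      intro t
      set W : ℕ → Ω → ℝ := fun n ω => min (max (B n ω) 0) (t:ℝ) with hW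
      have htnn : (0:ℝ) ≤ (t:ℝ) := Nat.cast_nonneg t
      have hW_nonneg : ∀ n ω, 0 ≤ W n ω := fun n ω => le_min (le_max_right _ _) htnn
      have hW_le : ∀ n ω, W n ω ≤ (t:ℝ) := fun n ω => min_le_right _ _
      have hW_meas : ∀ n, Measurable (W n) := fun n =>
        ((hB_meas n).max measurable_const).min measurable_const
      have hW_sm : ∀ n, StronglyMeasurable[ℱ n] (W (n + 1)) := by
        intro n
        have hBsm : StronglyMeasurable[ℱ n] (B (n + 1)) := by
          refine Finset.stronglyMeasurable_fun_sum _ fun k hk => ?_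
          have hk' : k - 1 ≤ n := by
            simp only [Finset.mem_Icc] at hk; omega
          exact stronglyMeasurable_condExp.mono (ℱ.mono hk')
        exact ((continuous_id.max continuous_const).min
          (continuous_const : Continuous fun _ : ℝ => (t:ℝ))).comp_stronglyMeasurable hBsm
      have hWq_int : ∀ n, Integrable (fun ω => W n ω ^ q) μ := by
        intro n
        refine (integrable_const ((t:ℝ) ^ q)).mono'
          (hcontq.measurable.comp (hW_meas n)).aestronglyMeasurable ?_
        refine Filter.Eventually.of_forall fun ω => ?_
        rw [Real.norm_of_nonneg (Real.rpow_nonneg (hW_nonneg n ω) q)]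
        exact Real.rpow_le_rpow (hW_nonneg n ω) (hW_le n ω) hq0.le
      have hWbdd : ∀ n, ∃ C, ∀ ω, ‖W n ω ^ (q - 1)‖ ≤ C := by
        intro n
        refine ⟨(t:ℝ) ^ (q - 1), fun ω => ?_⟩
        rw [Real.norm_of_nonneg (Real.rpow_nonneg (hW_nonneg n ω) _)]
        exact Real.rpow_le_rpow (hW_nonneg n ω) (hW_le n ω) hq1'.le
      have hWmul_int : ∀ n k, Integrable (fun ω => W n ω ^ (q - 1) * a k ω) μ := fun n k =>
        (ha_int k).bdd_mul (hcont.measurable.comp (hW_meas n)).aestronglyMeasurable (Filter.Eventually.of_forall (hWbdd n).choose_spec)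
      have hWA_int : Integrable (fun ω => W N ω ^ (q - 1) * A ω) μ :=
        hA_int.bdd_mul (hcont.measurable.comp (hW_meas N)).aestronglyMeasurable (Filter.Eventually.of_forall (hWbdd N).choose_spec)
      -- per-index inequality
      have step2 : ∀ m, (∫ ω, W (m + 1) ω ^ q ∂μ) - (∫ ω, W m ω ^ q ∂μ)
          ≤ q * ∫ ω, W (m + 1) ω ^ (q - 1) * a (m + 1) ω ∂μ := by
        intro m
        have hBsucc : ∀ ω, B (m + 1) ω = B m ω + c (m + 1) ω := by
          intro ω
          rw [hB]
          simp only
          rw [← Finset.Ico_add_one_right_eq_Icc, Finset.sum_Ico_succ_top (by omega), Finset.Ico_add_one_right_eq_Icc]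
        have hpt : ∀ᵐ ω ∂μ, W (m + 1) ω ^ q - W m ω ^ q
            ≤ q * (W (m + 1) ω ^ (q - 1) * c (m + 1) ω) := by
          filter_upwards [hc_nonneg] with ω hω
          have hBm : 0 ≤ B m ω := Finset.sum_nonneg fun k _ => hω k
          have hBmono : B m ω ≤ B (m + 1) ω := by
            rw [hBsucc ω]; linarith [hω (m + 1)]
          have hWle : W m ω ≤ W (m + 1) ω :=
            min_le_min (max_le_max hBmono le_rfl) le_rfl
          have hdiff : W (m + 1) ω - W m ω ≤ c (m + 1) ω := by
            have h1 : W (m + 1) ω - W m ω ≤ max (B (m+1) ω) 0 - max (B m ω) 0 :=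
              my_min_sub_min_le (max_le_max hBmono le_rfl)
            rw [max_eq_left hBm, max_eq_left (hBm.trans hBmono), hBsucc ω] at h1
            linarith
          have htan := my_rpow_tangent hq (hW_nonneg m ω) hWle
          have h2 : q * W (m+1) ω ^ (q-1) * (W (m+1) ω - W m ω)
              ≤ q * W (m+1) ω ^ (q-1) * c (m+1) ω := by
            refine mul_le_mul_of_nonneg_left hdiff ?_
            exact mul_nonneg hq0.le (Real.rpow_nonneg (hW_nonneg (m+1) ω) _)
          calc W (m + 1) ω ^ q - W m ω ^ q
              ≤ q * W (m+1) ω ^ (q-1) * (W (m+1) ω - W m ω) := htan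
            _ ≤ q * W (m+1) ω ^ (q-1) * c (m+1) ω := h2
            _ = q * (W (m+1) ω ^ (q-1) * c (m+1) ω) := by ring
        have hWc_int : Integrable (fun ω => W (m+1) ω ^ (q - 1) * c (m + 1) ω) μ :=
          (hc_int (m+1)).bdd_mul (hcont.measurable.comp (hW_meas (m+1))).aestronglyMeasurable (Filter.Eventually.of_forall (hWbdd (m+1)).choose_spec)
        have hint := integral_mono_ae ((hWq_int (m+1)).sub (hWq_int m))
          (hWc_int.const_mul q) hpt
        simp only [Pi.sub_apply] at hint
        rw [integral_sub (hWq_int (m+1)) (hWq_int m), integral_const_mul] at hint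
        -- pull-out property
        have hSM : StronglyMeasurable[ℱ m] (fun ω => W (m+1) ω ^ (q - 1)) :=
          hcont.comp_stronglyMeasurable (hW_sm m)
        have hmul := condExp_mul_of_stronglyMeasurable_left (μ := μ) (m := ℱ m) hSM
          (hWmul_int (m+1) (m+1)) (ha_int (m+1))
        have hc_eq : c (m + 1) = μ[a (m + 1)|ℱ m] := by
          rw [hc]; simp only [Nat.add_sub_cancel]
        have pull : ∫ ω, W (m+1) ω ^ (q-1) * c (m+1) ω ∂μ
            = ∫ ω, W (m+1) ω ^ (q-1) * a (m+1) ω ∂μ := by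
          rw [hc_eq]
          calc ∫ ω, W (m+1) ω ^ (q-1) * (μ[a (m + 1)|ℱ m]) ω ∂μ
              = ∫ ω, (μ[(fun ω => W (m+1) ω ^ (q-1)) * a (m + 1)|ℱ m]) ω ∂μ :=
                (integral_congr_ae hmul).symm
            _ = ∫ ω, ((fun ω => W (m+1) ω ^ (q-1)) * a (m + 1)) ω ∂μ :=
                integral_condExp (ℱ.le m)
            _ = ∫ ω, W (m+1) ω ^ (q-1) * a (m+1) ω ∂μ := rfl
        rw [pull] at hint
        exact hint
      -- telescoping and summation
      have hW0 : ∀ ω, W 0 ω = 0 := by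
        intro ω
        have hB0 : B 0 ω = 0 := by simp [hB]
        simp [hW, hB0, htnn]
      have hF0 : ∫ ω, W 0 ω ^ q ∂μ = 0 := by
        have : ∀ ω, W 0 ω ^ q = 0 := fun ω => by
          rw [hW0 ω, Real.zero_rpow hq0.ne']
        simp [this]
      have htel : ∫ ω, W N ω ^ q ∂μ
          = ∑ m ∈ Finset.range N, ((∫ ω, W (m+1) ω ^ q ∂μ) - ∫ ω, W m ω ^ q ∂μ) := by
        rw [Finset.sum_range_sub (fun n => ∫ ω, W n ω ^ q ∂μ), hF0, sub_zero]
      have hstep3 : ∀ m ∈ Finset.range N,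
          ∫ ω, W (m+1) ω ^ (q-1) * a (m+1) ω ∂μ
            ≤ ∫ ω, W N ω ^ (q-1) * a (m+1) ω ∂μ := by
        intro m hm
        have hmN : m + 1 ≤ N := Finset.mem_range.mp hm
        refine integral_mono_ae (hWmul_int (m+1) (m+1)) (hWmul_int N (m+1)) ?_
        filter_upwards [hc_nonneg] with ω hω
        have hBle : B (m+1) ω ≤ B N ω := by
          rw [hB]
          simp only
          refine Finset.sum_le_sum_of_subset_of_nonneg ?_ fun k hk _ => hω k
          exact Finset.Icc_subset_Icc le_rfl hmN
        have hWle : W (m+1) ω ≤ W N ω := min_le_min (max_le_max hBle le_rfl) le_rfl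
        exact mul_le_mul_of_nonneg_right
          (Real.rpow_le_rpow (hW_nonneg (m+1) ω) hWle hq1'.le) (ha_nonneg (m+1) ω)
      have hsum : ∑ m ∈ Finset.range N, ∫ ω, W N ω ^ (q-1) * a (m+1) ω ∂μ
          = ∫ ω, W N ω ^ (q-1) * A ω ∂μ := by
        rw [← integral_finset_sum _ fun m _ => hWmul_int N (m+1)]
        congr 1
        funext ω
        rw [hA]
        simp only
        rw [my_sum_Icc_one (fun k => a k ω) N, Finset.mul_sum]
      have hFN : ∫ ω, W N ω ^ q ∂μ ≤ q * ∫ ω, W N ω ^ (q-1) * A ω ∂μ := by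
        rw [htel, ← hsum, Finset.mul_sum]
        refine Finset.sum_le_sum fun m hm => ?_
        exact (step2 m).trans (mul_le_mul_of_nonneg_left (hstep3 m hm) hq0.le)
      -- pass to ENNReal
      set β : ℝ≥0∞ := ∫⁻ ω, (ENNReal.ofReal (W N ω)) ^ q ∂μ with hβ
      have hβ1 : β = ENNReal.ofReal (∫ ω, W N ω ^ q ∂μ) := by
        rw [hβ, ofReal_integral_eq_lintegral_ofReal (hWq_int N)
          (Filter.Eventually.of_forall fun ω => Real.rpow_nonneg (hW_nonneg N ω) q)]
        refine lintegral_congr fun ω => ?_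
        rw [← ENNReal.ofReal_rpow_of_nonneg (hW_nonneg N ω) hq0.le]
      have hβtop : β ≠ ⊤ := by rw [hβ1]; exact ENNReal.ofReal_ne_top
      have hstep : β ≤ ENNReal.ofReal q * (β ^ (1/r) * α ^ (1/q)) := by
        have e1 : β ≤ ENNReal.ofReal (q * ∫ ω, W N ω ^ (q-1) * A ω ∂μ) := by
          rw [hβ1]; exact ENNReal.ofReal_le_ofReal hFN
        have e2 : ENNReal.ofReal (q * ∫ ω, W N ω ^ (q-1) * A ω ∂μ)
            = ENNReal.ofReal q * ∫⁻ ω, (ENNReal.ofReal (W N ω)) ^ (q-1)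
                * ENNReal.ofReal (A ω) ∂μ := by
          rw [ENNReal.ofReal_mul hq0.le]
          congr 1
          rw [ofReal_integral_eq_lintegral_ofReal hWA_int
            (Filter.Eventually.of_forall fun ω =>
              mul_nonneg (Real.rpow_nonneg (hW_nonneg N ω) _) (hA_nonneg ω))]
          refine lintegral_congr fun ω => ?_
          rw [ENNReal.ofReal_mul (Real.rpow_nonneg (hW_nonneg N ω) _),
            ← ENNReal.ofReal_rpow_of_nonneg (hW_nonneg N ω) hq1'.le]
        have e3 : ∫⁻ ω, (ENNReal.ofReal (W N ω)) ^ (q-1) * ENNReal.ofReal (A ω) ∂μ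
            ≤ β ^ (1/r) * α ^ (1/q) := by
          have hH := ENNReal.lintegral_mul_le_Lp_mul_Lq μ hqr.symm
            (f := fun ω => (ENNReal.ofReal (W N ω)) ^ (q-1))
            (g := fun ω => ENNReal.ofReal (A ω))
            ((ENNReal.measurable_ofReal.comp (hW_meas N)).pow_const (q-1)).aemeasurable
            (ENNReal.measurable_ofReal.comp hA_meas).aemeasurable
          have hrw : ∫⁻ ω, ((ENNReal.ofReal (W N ω)) ^ (q-1)) ^ r ∂μ = β := by
            rw [hβ]
            refine lintegral_congr fun ω => ?_
            rw [← ENNReal.rpow_mul, hq1r]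
          rw [hrw] at hH
          exact hH
        calc β ≤ ENNReal.ofReal (q * ∫ ω, W N ω ^ (q-1) * A ω ∂μ) := e1
          _ = ENNReal.ofReal q * ∫⁻ ω, (ENNReal.ofReal (W N ω)) ^ (q-1)
                * ENNReal.ofReal (A ω) ∂μ := e2
          _ ≤ ENNReal.ofReal q * (β ^ (1/r) * α ^ (1/q)) := by
              exact mul_le_mul_right e3 _
      -- conclude the truncated bound
      by_cases hβ0 : β = 0
      · rw [hβ0, ENNReal.zero_rpow_of_pos (by positivity)]
        exact zero_le
      · have hsum1 : 1/q + 1/r = 1 := by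
          rw [one_div, one_div]; exact hqr.inv_add_inv_eq_one
        have hβsplit : β = β ^ (1/q) * β ^ (1/r) := by
          rw [← ENNReal.rpow_add _ _ hβ0 hβtop, hsum1, ENNReal.rpow_one]
        have hne0 : β ^ (1/r) ≠ 0 := by
          simp only [ne_eq, ENNReal.rpow_eq_zero_iff, not_or, not_and]
          constructor
          · intro h; exact absurd h hβ0
          · intro h; exact absurd h hβtop
        have hnetop : β ^ (1/r) ≠ ⊤ := by
          simp only [ne_eq, ENNReal.rpow_eq_top_iff, not_or, not_and]
          constructor
          · intro h; exact absurd h hβ0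
          · intro h; exact absurd h hβtop
        have hstep2 : β ^ (1/q) * β ^ (1/r) ≤ (ENNReal.ofReal q * α ^ (1/q)) * β ^ (1/r) := by
          rw [← hβsplit]
          calc β ≤ ENNReal.ofReal q * (β ^ (1/r) * α ^ (1/q)) := hstep
            _ = (ENNReal.ofReal q * α ^ (1/q)) * β ^ (1/r) := by ring
        exact (ENNReal.mul_le_mul_iff_left hne0 hnetop).mp hstep2
    -- limit over the truncation
    have hmeas_t : ∀ t : ℕ,
        Measurable fun ω => (ENNReal.ofReal (min (max (B N ω) 0) (t:ℝ))) ^ q := by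
      intro t
      exact (ENNReal.measurable_ofReal.comp
        (((hB_meas N).max measurable_const).min measurable_const)).pow_const q
    have hmono_t : Monotone fun t : ℕ =>
        fun ω => (ENNReal.ofReal (min (max (B N ω) 0) (t:ℝ))) ^ q := by
      intro i j hij
      intro ω
      refine ENNReal.rpow_le_rpow (ENNReal.ofReal_le_ofReal ?_) hq0.le
      exact min_le_min le_rfl (Nat.cast_le.mpr hij)
    have hsup : ∀ ω, (⨆ t : ℕ, (ENNReal.ofReal (min (max (B N ω) 0) (t:ℝ))) ^ q)
        = (ENNReal.ofReal (B N ω)) ^ q := by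
      intro ω
      refine le_antisymm (iSup_le fun t => ?_) ?_
      · refine ENNReal.rpow_le_rpow ?_ hq0.le
        rw [← my_ofReal_max (B N ω)]
        exact ENNReal.ofReal_le_ofReal (min_le_left _ _)
      · refine le_iSup_of_le ⌈max (B N ω) 0⌉₊ ?_
        rw [min_eq_left (Nat.le_ceil _), my_ofReal_max]
    have hlim : ∫⁻ ω, (ENNReal.ofReal (B N ω)) ^ q ∂μ
        = ⨆ t : ℕ, ∫⁻ ω, (ENNReal.ofReal (min (max (B N ω) 0) (t:ℝ))) ^ q ∂μ := by
      rw [← lintegral_iSup hmeas_t hmono_t]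
      refine lintegral_congr fun ω => ?_
      rw [hsup ω]
    have hfinal : ∫⁻ ω, (ENNReal.ofReal (B N ω)) ^ q ∂μ
        ≤ (ENNReal.ofReal q * α ^ (1/q)) ^ q := by
      rw [hlim]
      refine iSup_le fun t => ?_
      have hkt := key t
      have := ENNReal.rpow_le_rpow hkt hq0.le
      rw [← ENNReal.rpow_mul, one_div, inv_mul_cancel₀ hq0.ne', ENNReal.rpow_one] at this
      simpa [one_div] using this
    have := ENNReal.rpow_le_rpow hfinal (by positivity : (0:ℝ) ≤ 1/q)
    rwa [← ENNReal.rpow_mul, mul_one_div, div_self hq0.ne', ENNReal.rpow_one] at this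


/-- The real-valued indicator of the event `{ω | f ω ∈ A}`. -/
def evInd {Ω X : Type} (f : Ω → X) (A : Set X) : Ω → ℝ :=
  (f ⁻¹' A).indicator fun _ => (1 : ℝ)

/-- `(d n)_{n ≥ 1}` is a martingale difference sequence with respect to `ℱ` and `μ`. -/
def IsMDS {Ω X : Type} [NormedAddCommGroup X] [NormedSpace ℝ X] [CompleteSpace X]
    {m0 : MeasurableSpace Ω} (μ : Measure Ω) (ℱ : Filtration ℕ m0)
    (d : ℕ → Ω → X) : Prop :=
  (∀ n, 1 ≤ n → StronglyMeasurable[ℱ n] (d n)) ∧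
  (∀ n, 1 ≤ n → Integrable (d n) μ) ∧
  (∀ n, 1 ≤ n → μ[d n | ℱ (n - 1)] =ᵐ[μ] 0)

/-- `(d n)_{n ≥ 1}` is adapted to `ℱ`. -/
def Adapted1 {Ω X : Type} [TopologicalSpace X] {m0 : MeasurableSpace Ω}
    (ℱ : Filtration ℕ m0) (d : ℕ → Ω → X) : Prop :=
  ∀ n, 1 ≤ n → StronglyMeasurable[ℱ n] (d n)

/-- The sequences `(d n)_{n ≥ 1}` and `(e n)_{n ≥ 1}` are tangent. -/
def AreTangent {Ω X : Type} [MeasurableSpace X] {m0 : MeasurableSpace Ω}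
    (μ : Measure Ω) (ℱ : Filtration ℕ m0) (d e : ℕ → Ω → X) : Prop :=
  ∀ n, 1 ≤ n → ∀ A : Set X, MeasurableSet A →
    μ[evInd (d n) A | ℱ (n - 1)] =ᵐ[μ] μ[evInd (e n) A | ℱ (n - 1)]

/-- The sequence `(e n)_{n ≥ 1}` satisfies the (CI) condition. -/
def SatisfiesCI {Ω X : Type} [MeasurableSpace X] {m0 : MeasurableSpace Ω}
    (μ : Measure Ω) (ℱ : Filtration ℕ m0) (e : ℕ → Ω → X) : Prop :=
  ∃ 𝒢 : MeasurableSpace Ω,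
    𝒢 ≤ (⨆ n, (ℱ n : MeasurableSpace Ω)) ∧
    (∀ n, 1 ≤ n → ∀ A : Set X, MeasurableSet A →
      μ[evInd (e n) A | ℱ (n - 1)] =ᵐ[μ] μ[evInd (e n) A | 𝒢]) ∧
    (∀ n, 1 ≤ n → ∀ A : ℕ → Set X, (∀ i, MeasurableSet (A i)) →
      μ[fun ω => ∏ i ∈ Finset.Icc 1 n, evInd (e i) (A i) ω | 𝒢]
        =ᵐ[μ] fun ω => ∏ i ∈ Finset.Icc 1 n, (μ[evInd (e i) (A i) | 𝒢]) ω)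

/-- `(e n)_{n ≥ 1}` is a decoupled tangent sequence of `(d n)_{n ≥ 1}`:
it is adapted, tangent to `(d n)`, and satisfies the (CI) condition. -/
def IsDecoupledTangent {Ω X : Type} [NormedAddCommGroup X] [MeasurableSpace X]
    {m0 : MeasurableSpace Ω} (μ : Measure Ω) (ℱ : Filtration ℕ m0)
    (d e : ℕ → Ω → X) : Prop :=
  Adapted1 ℱ e ∧ AreTangent μ ℱ d e ∧ SatisfiesCI μ ℱ e

/-- The decoupling inequality for exponent `p` with constant `C`, over all complete
filtered probability spaces. -/
def DecIneq (X : Type) [NormedAddCommGroup X] [NormedSpace ℝ X] [CompleteSpace X]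
    [MeasurableSpace X] [BorelSpace X] (p C : ℝ) : Prop :=
  ∀ (Ω : Type) (m0 : MeasurableSpace Ω) (μ : Measure Ω),
    IsProbabilityMeasure μ → μ.IsComplete →
    ∀ (ℱ : Filtration ℕ m0) (d e : ℕ → Ω → X),
      IsMDS μ ℱ d → (∀ n, 1 ≤ n → MemLp (d n) (ENNReal.ofReal p) μ) →
      IsDecoupledTangent μ ℱ d e →
      ∀ N, 1 ≤ N →
        (∫ ω, ‖∑ n ∈ Finset.Icc 1 N, d n ω‖ ^ p ∂μ) ^ (1 / p)
          ≤ C * (∫ ω, ‖∑ n ∈ Finset.Icc 1 N, e n ω‖ ^ p ∂μ) ^ (1 / p)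

/-- `X` has the decoupling property for tangent martingale difference sequences. -/
def DecouplingProperty (X : Type) [NormedAddCommGroup X] [NormedSpace ℝ X] [CompleteSpace X]
    [MeasurableSpace X] [BorelSpace X] : Prop :=
  ∀ p : ℝ, 1 ≤ p → ∃ C : ℝ, DecIneq X p C

/-- `X` is a UMD Banach space. -/
def HasUMD (X : Type) [NormedAddCommGroup X] [NormedSpace ℝ X] [CompleteSpace X] : Prop :=
  ∀ p : ℝ, 1 < p → ∃ β : ℝ, 1 ≤ β ∧
    ∀ (Ω : Type) (m0 : MeasurableSpace Ω) (μ : Measure Ω), IsProbabilityMeasure μ →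
    ∀ (ℱ : Filtration ℕ m0) (d : ℕ → Ω → X),
      IsMDS μ ℱ d → (∀ n, 1 ≤ n → MemLp (d n) (ENNReal.ofReal p) μ) →
      ∀ ε : ℕ → ℝ, (∀ n, ε n = 1 ∨ ε n = -1) →
      ∀ N, 1 ≤ N →
        (∫ ω, ‖∑ n ∈ Finset.Icc 1 N, ε n • d n ω‖ ^ p ∂μ) ^ (1 / p)
          ≤ β * (∫ ω, ‖∑ n ∈ Finset.Icc 1 N, d n ω‖ ^ p ∂μ) ^ (1 / p)

/-- Davis decomposition, estimate for the large-jump part: if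
`(d n)_{n≥1}` is a martingale difference sequence in `L^q(Ω; X)` (`q ∈ [1, ∞)`) with
`d n = 0` for `n > N`, `v n = d n · 1_{‖d n‖ > 2 d*_{n-1}}`, and
`f2 n = Σ_{k=1}^n (v k − E(v k | F_{k-1}))`, then
`‖sup_{n≥1} ‖f2 n‖‖_{L^q} ≤ (2 + 2q) ‖d*‖_{L^q}` where `d* = sup_{n≥1} ‖d n‖`. -/
theorem davis_large_jump_martingale (X : Type) [NormedAddCommGroup X] [NormedSpace ℝ X]
    [CompleteSpace X] [MeasurableSpace X] [BorelSpace X]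
    (Ω : Type) (m0 : MeasurableSpace Ω) (μ : Measure Ω) [IsProbabilityMeasure μ]
    (hμ : μ.IsComplete) (ℱ : Filtration ℕ m0) (q : ℝ) (hq : 1 ≤ q)
    (d : ℕ → Ω → X) (N : ℕ) (hd : IsMDS μ ℱ d)
    (hLq : ∀ n, 1 ≤ n → MemLp (d n) (ENNReal.ofReal q) μ)
    (hdN : ∀ n, N < n → d n = 0)
    (v f2 : ℕ → Ω → X)
    (hv : ∀ n ω, v n ω =
      if 2 * ((((Finset.Icc 1 (n - 1)).sup fun m => ‖d m ω‖₊) : ℝ≥0) : ℝ) < ‖d n ω‖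
        then d n ω else 0)
    (hf2 : ∀ n ω, f2 n ω = ∑ k ∈ Finset.Icc 1 n, (v k ω - (μ[v k | ℱ (k - 1)]) ω)) :
    (∫⁻ ω, (⨆ n, (‖f2 n ω‖₊ : ℝ≥0∞)) ^ q ∂μ) ^ (1 / q)
      ≤ ENNReal.ofReal (2 + 2 * q) *
        (∫⁻ ω, (⨆ n, ⨆ (_ : 1 ≤ n), (‖d n ω‖₊ : ℝ≥0∞)) ^ q ∂μ) ^ (1 / q) := by
  have hq0 : (0:ℝ) < q := lt_of_lt_of_le one_pos hq
  set M : ℕ → Ω → ℝ := fun n ω => (((Finset.Icc 1 n).sup fun m => ‖d m ω‖₊ : ℝ≥0) : ℝ) with hM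
  have hM_nonneg : ∀ n ω, 0 ≤ M n ω := fun n ω => NNReal.coe_nonneg _
  have hM_mono : ∀ {n m : ℕ}, n ≤ m → ∀ ω, M n ω ≤ M m ω := by
    intro n m h ω
    exact NNReal.coe_le_coe.mpr (Finset.sup_mono (Finset.Icc_subset_Icc le_rfl h))
  have hM0 : ∀ ω, M 0 ω = 0 := fun ω => by simp [hM]
  have hM_meas : ∀ n, Measurable[ℱ n] (M n) := by
    intro n
    refine (measurable_coe_nnreal_real).comp ?_
    refine my_measurable_finset_sup _ fun m hm => ?_
    have hm1 : 1 ≤ m := (Finset.mem_Icc.mp hm).1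
    have hmn : m ≤ n := (Finset.mem_Icc.mp hm).2
    exact measurable_nnnorm.comp ((hd.1 m hm1).mono (ℱ.mono hmn)).measurable
  have hdle : ∀ k ω, 1 ≤ k → ‖d k ω‖ ≤ M k ω := by
    intro k ω hk
    have : ‖d k ω‖₊ ≤ (Finset.Icc 1 k).sup fun m => ‖d m ω‖₊ :=
      Finset.le_sup (f := fun m => ‖d m ω‖₊) (Finset.mem_Icc.mpr ⟨hk, le_rfl⟩)
    calc ‖d k ω‖ = ((‖d k ω‖₊ : ℝ≥0) : ℝ) := (coe_nnnorm _).symm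
      _ ≤ M k ω := NNReal.coe_le_coe.mpr this
  -- measurability and integrability of v
  have hv_eq : ∀ n, v n = Set.indicator {ω | 2 * M (n-1) ω < ‖d n ω‖} (d n) := by
    intro n
    funext ω
    by_cases h : 2 * M (n-1) ω < ‖d n ω‖ <;>
      simp [hv n ω, Set.indicator_apply, h, hM]
  have hset_meas : ∀ n, 1 ≤ n → MeasurableSet[ℱ n] {ω | 2 * M (n-1) ω < ‖d n ω‖} := by
    intro n hn
    have h1 : Measurable[ℱ n] fun ω => 2 * M (n-1) ω :=
      (measurable_const.mul ((hM_meas (n-1)).mono (ℱ.mono (Nat.sub_le n 1)) le_rfl))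
    have h2 : Measurable[ℱ n] fun ω => ‖d n ω‖ := (hd.1 n hn).norm.measurable
    exact measurableSet_lt h1 h2
  have hv_sm : ∀ n, 1 ≤ n → StronglyMeasurable[ℱ n] (v n) := by
    intro n hn
    rw [hv_eq n]
    exact (hd.1 n hn).indicator (hset_meas n hn)
  have hv_Lq : ∀ n, 1 ≤ n → MemLp (v n) (ENNReal.ofReal q) μ := by
    intro n hn
    rw [hv_eq n]
    exact (hLq n hn).indicator (ℱ.le n _ (hset_meas n hn))
  have hv_int : ∀ n, 1 ≤ n → Integrable (v n) μ := fun n hn =>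
    (hv_Lq n hn).integrable (by simpa using ENNReal.one_le_ofReal.mpr hq)
  have hv_zero : ∀ n, N < n → v n = (0 : Ω → X) := by
    intro n hn
    funext ω
    rw [hv n ω, hdN n hn]
    simp
  -- the absolute values
  set a : ℕ → Ω → ℝ := fun k ω => if k = 0 then 0 else ‖v k ω‖ with ha
  have ha_eq : ∀ k, 1 ≤ k → a k = fun ω => ‖v k ω‖ := by
    intro k hk
    funext ω
    rw [ha]
    simp only
    rw [if_neg (by omega)]
  have ha_meas : ∀ k, Measurable (a k) := by
    intro k
    rcases Nat.eq_zero_or_pos k with rfl | hk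
    · simp only [ha, if_pos rfl]
      exact measurable_const
    · rw [ha_eq k hk]
      exact ((hv_sm k hk).mono (ℱ.le k)).norm.measurable
  have ha_int : ∀ k, Integrable (a k) μ := by
    intro k
    rcases Nat.eq_zero_or_pos k with rfl | hk
    · simp only [ha, if_pos rfl]
      exact integrable_const 0
    · rw [ha_eq k hk]
      exact (hv_int k hk).norm
  have ha_nonneg : ∀ k ω, 0 ≤ a k ω := by
    intro k ω
    rw [ha]
    simp only
    split
    · exact le_rfl
    · exact norm_nonneg _
  -- pointwise bound on the sum of ‖v k‖
  have hAle : ∀ n ω, ∑ k ∈ Finset.Icc 1 n, a k ω ≤ 2 * M n ω := by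
    intro n ω
    have hterm : ∀ k ∈ Finset.Icc 1 n, a k ω ≤ 2 * (M k ω - M (k-1) ω) := by
      intro k hk
      have hk1 : 1 ≤ k := (Finset.mem_Icc.mp hk).1
      rw [ha_eq k hk1]
      simp only
      rw [hv k ω]
      split_ifs with h
      · have h1 : ‖d k ω‖ ≤ M k ω := hdle k ω hk1
        have h2 : 2 * M (k-1) ω < ‖d k ω‖ := h
        linarith
      · rw [norm_zero]
        have := hM_mono (Nat.sub_le k 1) ω
        linarith
    calc ∑ k ∈ Finset.Icc 1 n, a k ω ≤ ∑ k ∈ Finset.Icc 1 n, 2 * (M k ω - M (k-1) ω) :=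
          Finset.sum_le_sum hterm
      _ = 2 * ∑ k ∈ Finset.Icc 1 n, (M k ω - M (k-1) ω) := by rw [Finset.mul_sum]
      _ = 2 * (M n ω - M 0 ω) := by rw [my_telescope (fun k => M k ω) n]
      _ = 2 * M n ω := by rw [hM0 ω]; ring
  -- conditional expectations of the norms
  set S : Ω → ℝ := fun ω => ∑ k ∈ Finset.Icc 1 N, (μ[a k|ℱ (k - 1)]) ω with hS
  set D : Ω → ℝ := M N with hD
  have hD_meas : Measurable D := (hM_meas N).mono (ℱ.le N) le_rfl
  have hS_meas : Measurable S := Finset.measurable_sum _ fun k _ =>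
    (stronglyMeasurable_condExp.mono (ℱ.le _)).measurable
  have hDsup : ∀ ω, (⨆ n, ⨆ (_ : 1 ≤ n), (‖d n ω‖₊ : ℝ≥0∞)) = ENNReal.ofReal (D ω) := by
    intro ω
    have hre : ENNReal.ofReal (D ω)
        = (((Finset.Icc 1 N).sup fun m => ‖d m ω‖₊ : ℝ≥0) : ℝ≥0∞) :=
      ENNReal.ofReal_coe_nnreal
    rw [hre]
    refine le_antisymm (iSup_le fun n => iSup_le fun hn => ?_) ?_
    · by_cases hnN : n ≤ N
      · exact ENNReal.coe_le_coe.mpr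
          (Finset.le_sup (f := fun m => ‖d m ω‖₊) (Finset.mem_Icc.mpr ⟨hn, hnN⟩))
      · rw [hdN n (by omega)]
        simp
    · rw [ENNReal.coe_finset_sup]
      exact Finset.sup_le fun m hm => le_iSup₂_of_le m (Finset.mem_Icc.mp hm).1 le_rfl
  have hcond : ∀ k, 1 ≤ k →
      (fun ω => ‖(μ[v k|ℱ (k - 1)]) ω‖) ≤ᵐ[μ] μ[a k|ℱ (k - 1)] := by
    intro k hk
    have h1 := my_norm_condexp_le (ℱ.le (k - 1)) (hv_int k hk)
    have h2 : μ[fun ω => ‖v k ω‖|ℱ (k - 1)] = μ[a k|ℱ (k - 1)] := by rw [ha_eq k hk]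
    rwa [h2] at h1
  have hcnn : ∀ k, 0 ≤ᵐ[μ] μ[a k|ℱ (k - 1)] := fun k =>
    condExp_nonneg (Filter.Eventually.of_forall (ha_nonneg k))
  have hgood : ∀ᵐ ω ∂μ, ∀ k, (1 ≤ k → ‖(μ[v k|ℱ (k - 1)]) ω‖ ≤ (μ[a k|ℱ (k - 1)]) ω)
      ∧ 0 ≤ (μ[a k|ℱ (k - 1)]) ω := by
    rw [ae_all_iff]
    intro k
    rcases Nat.eq_zero_or_pos k with rfl | hk
    · filter_upwards [hcnn 0] with ω h
      exact ⟨fun h1 => absurd h1 (by omega), h⟩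
    · filter_upwards [hcond k hk, hcnn k] with ω h1 h2
      exact ⟨fun _ => h1, h2⟩
  have hptwise : ∀ᵐ ω ∂μ, ∀ n, (‖f2 n ω‖₊ : ℝ≥0∞)
      ≤ ENNReal.ofReal (2 * D ω) + ENNReal.ofReal (S ω) := by
    filter_upwards [hgood] with ω hω
    intro n
    have hSnn : 0 ≤ S ω := Finset.sum_nonneg fun k _ => (hω k).2
    have hb : ‖f2 n ω‖ ≤ 2 * D ω + S ω := by
      rw [hf2 n ω]
      have t1 : ‖∑ k ∈ Finset.Icc 1 n, (v k ω - (μ[v k|ℱ (k - 1)]) ω)‖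
          ≤ ∑ k ∈ Finset.Icc 1 n, ‖v k ω - (μ[v k|ℱ (k - 1)]) ω‖ := norm_sum_le _ _
      have t2 : ∑ k ∈ Finset.Icc 1 n, ‖v k ω - (μ[v k|ℱ (k - 1)]) ω‖
          ≤ ∑ k ∈ Finset.Icc 1 (max n N), ‖v k ω - (μ[v k|ℱ (k - 1)]) ω‖ :=
        Finset.sum_le_sum_of_subset_of_nonneg
          (Finset.Icc_subset_Icc le_rfl (le_max_left _ _)) (fun k _ _ => norm_nonneg _)
      have t3 : ∑ k ∈ Finset.Icc 1 (max n N), ‖v k ω - (μ[v k|ℱ (k - 1)]) ω‖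
          = ∑ k ∈ Finset.Icc 1 N, ‖v k ω - (μ[v k|ℱ (k - 1)]) ω‖ := by
        refine (Finset.sum_subset (Finset.Icc_subset_Icc le_rfl (le_max_right _ _)) ?_).symm
        intro k hk hk'
        have hkN : N < k := by
          simp only [Finset.mem_Icc] at hk hk'
          omega
        rw [hv_zero k hkN, condExp_zero]
        simp
      have t4 : ∑ k ∈ Finset.Icc 1 N, ‖v k ω - (μ[v k|ℱ (k - 1)]) ω‖
          ≤ ∑ k ∈ Finset.Icc 1 N, (a k ω + (μ[a k|ℱ (k - 1)]) ω) := by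
        refine Finset.sum_le_sum fun k hk => ?_
        have hk1 : 1 ≤ k := (Finset.mem_Icc.mp hk).1
        have h4 : ‖v k ω - (μ[v k|ℱ (k - 1)]) ω‖ ≤ ‖v k ω‖ + ‖(μ[v k|ℱ (k - 1)]) ω‖ :=
          norm_sub_le _ _
        have h5 := (hω k).1 hk1
        have h6 : a k ω = ‖v k ω‖ := by rw [ha_eq k hk1]
        linarith
      have t5 : ∑ k ∈ Finset.Icc 1 N, (a k ω + (μ[a k|ℱ (k - 1)]) ω)
          = (∑ k ∈ Finset.Icc 1 N, a k ω) + S ω := Finset.sum_add_distrib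
      have t6 := hAle N ω
      have t7 : S ω = ∑ k ∈ Finset.Icc 1 N, (μ[a k|ℱ (k - 1)]) ω := rfl
      linarith
    calc (‖f2 n ω‖₊ : ℝ≥0∞) = ENNReal.ofReal ‖f2 n ω‖ := (ofReal_norm _).symm
      _ ≤ ENNReal.ofReal (2 * D ω + S ω) := ENNReal.ofReal_le_ofReal hb
      _ = ENNReal.ofReal (2 * D ω) + ENNReal.ofReal (S ω) :=
          ENNReal.ofReal_add (by positivity) hSnn
  -- assemble everything
  set L : ℝ≥0∞ := (∫⁻ ω, (ENNReal.ofReal (D ω)) ^ q ∂μ) ^ (1/q) with hL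
  have hmink : (∫⁻ ω, (⨆ n, (‖f2 n ω‖₊ : ℝ≥0∞)) ^ q ∂μ) ^ (1/q)
      ≤ (∫⁻ ω, (ENNReal.ofReal (2 * D ω)) ^ q ∂μ) ^ (1/q)
        + (∫⁻ ω, (ENNReal.ofReal (S ω)) ^ q ∂μ) ^ (1/q) := by
    have hmono : (∫⁻ ω, (⨆ n, (‖f2 n ω‖₊ : ℝ≥0∞)) ^ q ∂μ)
        ≤ ∫⁻ ω, (((fun ω => ENNReal.ofReal (2 * D ω))
            + fun ω => ENNReal.ofReal (S ω)) ω) ^ q ∂μ := by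
      refine lintegral_mono_ae ?_
      filter_upwards [hptwise] with ω hω
      refine ENNReal.rpow_le_rpow ?_ hq0.le
      exact iSup_le fun n => hω n
    have hadd := ENNReal.lintegral_Lp_add_le (μ := μ)
      (f := fun ω => ENNReal.ofReal (2 * D ω)) (g := fun ω => ENNReal.ofReal (S ω))
      ((measurable_const.mul hD_meas).ennreal_ofReal).aemeasurable
      (hS_meas.ennreal_ofReal).aemeasurable hq
    exact (ENNReal.rpow_le_rpow hmono (by positivity)).trans hadd
  have h2D : (∫⁻ ω, (ENNReal.ofReal (2 * D ω)) ^ q ∂μ) ^ (1/q) = 2 * L := by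
    have e1 : ∀ ω, (ENNReal.ofReal (2 * D ω)) ^ q
        = (2:ℝ≥0∞) ^ q * (ENNReal.ofReal (D ω)) ^ q := by
      intro ω
      rw [ENNReal.ofReal_mul (by norm_num : (0:ℝ) ≤ 2),
        ENNReal.mul_rpow_of_nonneg _ _ hq0.le]
      norm_num
    rw [lintegral_congr e1,
      lintegral_const_mul _ ((hD_meas.ennreal_ofReal).pow_const q),
      ENNReal.mul_rpow_of_nonneg _ _ (by positivity : (0:ℝ) ≤ 1/q),
      ← ENNReal.rpow_mul, mul_one_div, div_self hq0.ne', ENNReal.rpow_one, hL]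
  have hgar := my_garsia μ ℱ hq N a ha_meas ha_int ha_nonneg
  have hA2D : (∫⁻ ω, (ENNReal.ofReal (∑ k ∈ Finset.Icc 1 N, a k ω)) ^ q ∂μ) ^ (1/q)
      ≤ 2 * L := by
    rw [← h2D]
    refine ENNReal.rpow_le_rpow (lintegral_mono fun ω => ?_) (by positivity)
    exact ENNReal.rpow_le_rpow (ENNReal.ofReal_le_ofReal (hAle N ω)) hq0.le
  have hSle : (∫⁻ ω, (ENNReal.ofReal (S ω)) ^ q ∂μ) ^ (1/q)
      ≤ ENNReal.ofReal q * (2 * L) := hgar.trans (mul_le_mul_right hA2D _)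
  have hRHS : (∫⁻ ω, (⨆ n, ⨆ (_ : 1 ≤ n), (‖d n ω‖₊ : ℝ≥0∞)) ^ q ∂μ) ^ (1/q) = L := by
    rw [hL]
    congr 1
    exact lintegral_congr fun ω => by rw [hDsup ω]
  have hconst : ENNReal.ofReal (2 + 2 * q) = 2 + 2 * ENNReal.ofReal q := by
    rw [ENNReal.ofReal_add (by norm_num) (by positivity),
      ENNReal.ofReal_mul (by norm_num)]
    norm_num
  rw [hRHS]
  refine hmink.trans ?_
  calc (∫⁻ ω, (ENNReal.ofReal (2 * D ω)) ^ q ∂μ) ^ (1/q)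
        + (∫⁻ ω, (ENNReal.ofReal (S ω)) ^ q ∂μ) ^ (1/q)
      ≤ 2 * L + ENNReal.ofReal q * (2 * L) := add_le_add (le_of_eq h2D) hSle
    _ = ENNReal.ofReal (2 + 2 * q) * L := by rw [hconst]; ring


end
end

section
/- Let X be a Banach space, p ∈ [1, ∞) and C ≥ 0. Let (r_n)_{n≥1} and (r̃_n)_{n≥1} be two independent Rademacher sequences (i.i.d. random variables with P(r_n = 1) = P(r_n = −1) = 1/2, the two sequences independent of each other). Then the following are equivalent: (a) for every N ≥ 1 and all functions φ_n : {−1,1}^{n−1} → X (1 ≤ n ≤ N), E‖Σ_{n=1}^N r_n φ_n(r_1, …, r_{n−1})‖^p ≤ C^p E‖Σ_{n=1}^N r̃_n φ_n(r_1, …, r_{n−1})‖^p; (b) for every N ≥ 1 and all functions φ_n : {−1,1}^{n−1} → X (1 ≤ n ≤ N), E‖Σ_{n=1}^N r_n φ_n(r_1, …, r_{n−1})‖^p ≤ C^p E‖Σ_{n=1}^N r̃_n r_n φ_n(r_1, …, r_{n−1})‖^p. -/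
open MeasureTheory ProbabilityTheory
open scoped ENNReal NNReal Classical

noncomputable section

namespace PWAux

def sg (b : Bool) : ℝ := if b then 1 else -1

lemma sg_inj : Function.Injective sg := by
  intro a b h
  cases a <;> cases b <;> simp [sg] at h ⊢ <;> norm_num at h

variable {Ω : Type} [MeasurableSpace Ω] (μ : Measure Ω) [IsProbabilityMeasure μ]

/-- extend a sign choice on `I` to all of `ℕ`. -/
def ext (I : Finset ℕ) (e : {n // n ∈ I} → Bool) (n : ℕ) : Bool :=
  if h : n ∈ I then e ⟨n, h⟩ else false

lemma ext_apply (I : Finset ℕ) (e : {n // n ∈ I} → Bool) {n : ℕ} (h : n ∈ I) :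
    ext I e n = e ⟨n, h⟩ := dif_pos h

lemma ae_pm (f : Ω → ℝ) (hf : Measurable f)
    (h1 : μ {ω | f ω = 1} = 1 / 2) (h2 : μ {ω | f ω = -1} = 1 / 2) :
    ∀ᵐ ω ∂μ, f ω = 1 ∨ f ω = -1 := by
  have hA : MeasurableSet {ω | f ω = 1} := hf (measurableSet_singleton 1)
  have hB : MeasurableSet {ω | f ω = -1} := hf (measurableSet_singleton (-1))
  have hd : Disjoint {ω | f ω = 1} {ω | f ω = -1} := by
    rw [Set.disjoint_left]
    intro ω hω1 hω2
    simp only [Set.mem_setOf_eq] at hω1 hω2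
    rw [hω1] at hω2; norm_num at hω2
  have hu : μ ({ω | f ω = 1} ∪ {ω | f ω = -1}) = 1 := by
    rw [measure_union hd hB, h1, h2]
    rw [one_div, ENNReal.inv_two_add_inv_two]
  have hc : μ ({ω | f ω = 1} ∪ {ω | f ω = -1})ᶜ = 0 := by
    rw [measure_compl (hA.union hB) (measure_ne_top μ _), hu, measure_univ, tsub_self]
  rw [ae_iff]
  have hs : {a | ¬(f a = 1 ∨ f a = -1)} = ({ω | f ω = 1} ∪ {ω | f ω = -1})ᶜ := by
    ext ω; simp [not_or]
  rw [hs]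
  exact hc

lemma integral_signs (I : Finset ℕ) (u v : ℕ → Ω → ℝ)
    (hu : ∀ n, Measurable (u n)) (hv : ∀ n, Measurable (v n))
    (hmeas : ∀ e d : ℕ → Bool,
      μ (⋂ n ∈ I, ({ω | u n ω = sg (e n)} ∩ {ω | v n ω = sg (d n)}))
        = 2⁻¹ ^ (2 * I.card))
    (hua : ∀ n ∈ I, ∀ᵐ ω ∂μ, u n ω = 1 ∨ u n ω = -1)
    (hva : ∀ n ∈ I, ∀ᵐ ω ∂μ, v n ω = 1 ∨ v n ω = -1)
    (F : (ℕ → ℝ) → (ℕ → ℝ) → ℝ)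
    (hF : ∀ a a' b b', (∀ n ∈ I, a n = a' n) → (∀ n ∈ I, b n = b' n) → F a b = F a' b') :
    ∫ ω, F (fun n => u n ω) (fun n => v n ω) ∂μ
      = ∑ s : ({n // n ∈ I} → Bool) × ({n // n ∈ I} → Bool),
          ((2⁻¹ : ℝ≥0∞) ^ (2 * I.card)).toReal *
            F (fun n => sg (ext I s.1 n)) (fun n => sg (ext I s.2 n)) := by
  classical
  set E : ({n // n ∈ I} → Bool) × ({n // n ∈ I} → Bool) → Set Ω := fun s =>
    ⋂ n ∈ I, ({ω | u n ω = sg (ext I s.1 n)} ∩ {ω | v n ω = sg (ext I s.2 n)}) with hE_def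
  have hE : ∀ s, MeasurableSet (E s) := by
    intro s
    refine MeasurableSet.biInter I.countable_toSet fun n _ => ?_
    exact ((hu n) (measurableSet_singleton _)).inter ((hv n) (measurableSet_singleton _))
  have hμE : ∀ s, μ (E s) = 2⁻¹ ^ (2 * I.card) := fun s => hmeas (ext I s.1) (ext I s.2)
  have hae : ∀ᵐ ω ∂μ, ∀ n ∈ I,
      (u n ω = 1 ∨ u n ω = -1) ∧ (v n ω = 1 ∨ v n ω = -1) := by
    have := (ae_ball_iff (μ := μ) I.countable_toSet
      (p := fun ω n (_ : n ∈ (I : Set ℕ)) =>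
        (u n ω = 1 ∨ u n ω = -1) ∧ (v n ω = 1 ∨ v n ω = -1))).2
      (fun n hn => (hua n hn).and (hva n hn))
    exact this
  have hpt : ∀ ω, (∀ n ∈ I, (u n ω = 1 ∨ u n ω = -1) ∧ (v n ω = 1 ∨ v n ω = -1)) →
      F (fun n => u n ω) (fun n => v n ω)
        = ∑ s : ({n // n ∈ I} → Bool) × ({n // n ∈ I} → Bool),
            (E s).indicator
              (fun _ => F (fun n => sg (ext I s.1 n)) (fun n => sg (ext I s.2 n))) ω := by
    intro ω hω
    set s₀ : ({n // n ∈ I} → Bool) × ({n // n ∈ I} → Bool) :=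
      (fun n => if u n.1 ω = 1 then true else false,
       fun n => if v n.1 ω = 1 then true else false) with hs₀
    have hu₀ : ∀ n (hn : n ∈ I), u n ω = sg (ext I s₀.1 n) := by
      intro n hn
      rw [ext_apply I s₀.1 hn]
      show u n ω = sg (if u n ω = 1 then true else false)
      by_cases h : u n ω = 1
      · rw [if_pos h, h]; simp [sg]
      · rw [if_neg h]
        simpa [sg] using (hω n hn).1.resolve_left h
    have hv₀ : ∀ n (hn : n ∈ I), v n ω = sg (ext I s₀.2 n) := by
      intro n hn
      rw [ext_apply I s₀.2 hn]
      show v n ω = sg (if v n ω = 1 then true else false)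
      by_cases h : v n ω = 1
      · rw [if_pos h, h]; simp [sg]
      · rw [if_neg h]
        simpa [sg] using (hω n hn).2.resolve_left h
    have hmem : ω ∈ E s₀ := by
      rw [hE_def]
      simp only [Set.mem_iInter, Set.mem_inter_iff, Set.mem_setOf_eq]
      exact fun n hn => ⟨hu₀ n hn, hv₀ n hn⟩
    rw [Finset.sum_eq_single_of_mem s₀ (Finset.mem_univ _)]
    · rw [Set.indicator_of_mem hmem]
      exact hF _ _ _ _ (fun n hn => hu₀ n hn) (fun n hn => hv₀ n hn)
    · intro s _ hs
      rw [Set.indicator_of_notMem]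
      intro hmem'
      apply hs
      have hmemS : ∀ n (hn : n ∈ I),
          u n ω = sg (ext I s.1 n) ∧ v n ω = sg (ext I s.2 n) := by
        intro n hn
        have := Set.mem_iInter.mp hmem' n
        have := Set.mem_iInter.mp this hn
        exact this
      have e1 : s.1 = s₀.1 := by
        funext m
        have h1 := (hmemS m.1 m.2).1
        have h2 := hu₀ m.1 m.2
        have h3 := sg_inj (h1.symm.trans h2)
        rwa [ext_apply I s.1 m.2, ext_apply I s₀.1 m.2] at h3
      have e2 : s.2 = s₀.2 := by
        funext m
        have h1 := (hmemS m.1 m.2).2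
        have h2 := hv₀ m.1 m.2
        have h3 := sg_inj (h1.symm.trans h2)
        rwa [ext_apply I s.2 m.2, ext_apply I s₀.2 m.2] at h3
      exact Prod.ext_iff.mpr ⟨e1, e2⟩
  calc ∫ ω, F (fun n => u n ω) (fun n => v n ω) ∂μ
      = ∫ ω, (∑ s : ({n // n ∈ I} → Bool) × ({n // n ∈ I} → Bool),
          (E s).indicator
            (fun _ => F (fun n => sg (ext I s.1 n)) (fun n => sg (ext I s.2 n))) ω) ∂μ := by
        refine integral_congr_ae (hae.mono fun ω hω => hpt ω hω)
    _ = ∑ s : ({n // n ∈ I} → Bool) × ({n // n ∈ I} → Bool),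
          ∫ ω, (E s).indicator
            (fun _ => F (fun n => sg (ext I s.1 n)) (fun n => sg (ext I s.2 n))) ω ∂μ := by
        refine integral_finset_sum _ fun s _ => (integrable_const _).indicator (hE s)
    _ = ∑ s : ({n // n ∈ I} → Bool) × ({n // n ∈ I} → Bool),
          ((2⁻¹ : ℝ≥0∞) ^ (2 * I.card)).toReal *
            F (fun n => sg (ext I s.1 n)) (fun n => sg (ext I s.2 n)) := by
        refine Finset.sum_congr rfl fun s _ => ?_
        rw [integral_indicator_const _ (hE s), measureReal_def, hμE s, smul_eq_mul]

lemma meas_atom {r r' : ℕ → Ω → ℝ}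
    (hindep : iIndepFun (Sum.elim r r') μ)
    (hdist : ∀ i : ℕ ⊕ ℕ, μ {ω | Sum.elim r r' i ω = 1} = 1 / 2 ∧
      μ {ω | Sum.elim r r' i ω = -1} = 1 / 2)
    (I : Finset ℕ) (e d : ℕ → Bool) :
    μ (⋂ n ∈ I, ({ω | r n ω = sg (e n)} ∩ {ω | r' n ω = sg (d n)}))
      = 2⁻¹ ^ (2 * I.card) := by
  classical
  have hhalf : ∀ (i : ℕ ⊕ ℕ) (b : Bool), μ (Sum.elim r r' i ⁻¹' {sg b}) = 2⁻¹ := by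
    intro i b
    have h1 := (hdist i).1
    have h2 := (hdist i).2
    cases b
    · show μ {ω | Sum.elim r r' i ω = sg false} = 2⁻¹
      rw [show sg false = -1 from rfl, h2, one_div]
    · show μ {ω | Sum.elim r r' i ω = sg true} = 2⁻¹
      rw [show sg true = 1 from rfl, h1, one_div]
  set A : ℕ ⊕ ℕ → Set ℝ := Sum.elim (fun n => {sg (e n)}) (fun n => {sg (d n)}) with hA
  have hset : (⋂ n ∈ I, ({ω | r n ω = sg (e n)} ∩ {ω | r' n ω = sg (d n)}))
      = ⋂ i ∈ I.disjSum I, Sum.elim r r' i ⁻¹' A i := by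
    ext ω
    simp only [Set.mem_iInter, Set.mem_inter_iff, Set.mem_setOf_eq, Set.mem_preimage]
    constructor
    · intro h i hi
      rcases Finset.mem_disjSum.mp hi with ⟨a, ha, rfl⟩ | ⟨b, hb, rfl⟩
      · exact (h a ha).1
      · exact (h b hb).2
    · intro h n hn
      exact ⟨h (Sum.inl n) (Finset.inl_mem_disjSum.mpr hn),
        h (Sum.inr n) (Finset.inr_mem_disjSum.mpr hn)⟩
  have hAmeas : ∀ i, i ∈ I.disjSum I → MeasurableSet (A i) := by
    intro i _
    cases i <;> exact measurableSet_singleton _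
  rw [hset, hindep.measure_inter_preimage_eq_mul _ hAmeas]
  rw [Finset.prod_disjSum]
  have h1 : ∀ n ∈ I, μ (Sum.elim r r' (Sum.inl n) ⁻¹' A (Sum.inl n)) = 2⁻¹ := fun n _ =>
    hhalf (Sum.inl n) (e n)
  have h2 : ∀ n ∈ I, μ (Sum.elim r r' (Sum.inr n) ⁻¹' A (Sum.inr n)) = 2⁻¹ := fun n _ =>
    hhalf (Sum.inr n) (d n)
  rw [Finset.prod_congr rfl h1, Finset.prod_congr rfl h2, Finset.prod_const,
    ← pow_add, two_mul]

lemma twist (I : Finset ℕ) (r r' : ℕ → Ω → ℝ) (e d : ℕ → Bool) :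
    (⋂ n ∈ I, ({ω | r n ω = sg (e n)} ∩ {ω | r' n ω * r n ω = sg (d n)}))
      = ⋂ n ∈ I, ({ω | r n ω = sg (e n)} ∩ {ω | r' n ω = sg (d n == e n)}) := by
  refine Set.iInter₂_congr fun n _ => ?_
  ext ω
  simp only [Set.mem_inter_iff, Set.mem_setOf_eq]
  cases he : e n <;> cases hd : d n <;> norm_num [sg] <;>
    intro h1 <;> rw [h1] <;> constructor <;> intro h2 <;> linarith

end PWAux

open PWAux

/-- Equivalence of the decoupling inequality and Garling's
randomization inequality for Paley–Walsh martingales: given two independent Rademacher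
sequences `(r n)` and `(r' n)`, the inequality
`E‖Σ r_n φ_n(r_1,…,r_{n-1})‖^p ≤ C^p E‖Σ r'_n φ_n(r_1,…,r_{n-1})‖^p` (for all `N ≥ 1` and
all `φ`) holds iff
`E‖Σ r_n φ_n(r_1,…,r_{n-1})‖^p ≤ C^p E‖Σ r'_n r_n φ_n(r_1,…,r_{n-1})‖^p` (for all `N ≥ 1`
and all `φ`). -/
theorem paleyWalsh_decoupling_iff_randomization (X : Type) [NormedAddCommGroup X]
    [NormedSpace ℝ X] [CompleteSpace X] (p C : ℝ) (hp : 1 ≤ p) (hC : 0 ≤ C)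
    (Ω : Type) (m0 : MeasurableSpace Ω) (μ : Measure Ω) [IsProbabilityMeasure μ]
    (hμ : μ.IsComplete)
    (r r' : ℕ → Ω → ℝ)
    (hm : ∀ i : ℕ ⊕ ℕ, Measurable (Sum.elim r r' i))
    (hindep : iIndepFun (Sum.elim r r') μ)
    (hdist : ∀ i : ℕ ⊕ ℕ, μ {ω | Sum.elim r r' i ω = 1} = 1 / 2 ∧
      μ {ω | Sum.elim r r' i ω = -1} = 1 / 2) :
    (∀ N, 1 ≤ N → ∀ φ : (n : ℕ) → ({ m // m ∈ Finset.Ico 1 n } → ℝ) → X,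
        ∫ ω, ‖∑ n ∈ Finset.Icc 1 N, r n ω • φ n fun k => r k.1 ω‖ ^ p ∂μ
          ≤ C ^ p * ∫ ω, ‖∑ n ∈ Finset.Icc 1 N, r' n ω • φ n fun k => r k.1 ω‖ ^ p ∂μ)
      ↔
    (∀ N, 1 ≤ N → ∀ φ : (n : ℕ) → ({ m // m ∈ Finset.Ico 1 n } → ℝ) → X,
        ∫ ω, ‖∑ n ∈ Finset.Icc 1 N, r n ω • φ n fun k => r k.1 ω‖ ^ p ∂μ
          ≤ C ^ p *
            ∫ ω, ‖∑ n ∈ Finset.Icc 1 N, (r' n ω * r n ω) • φ n fun k => r k.1 ω‖ ^ p ∂μ) := by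
  classical
  have hur : ∀ n, Measurable (r n) := fun n => hm (Sum.inl n)
  have hur' : ∀ n, Measurable (r' n) := fun n => hm (Sum.inr n)
  have haer : ∀ n, ∀ᵐ ω ∂μ, r n ω = 1 ∨ r n ω = -1 := fun n =>
    ae_pm μ (r n) (hur n) (hdist (Sum.inl n)).1 (hdist (Sum.inl n)).2
  have haer' : ∀ n, ∀ᵐ ω ∂μ, r' n ω = 1 ∨ r' n ω = -1 := fun n =>
    ae_pm μ (r' n) (hur' n) (hdist (Sum.inr n)).1 (hdist (Sum.inr n)).2
  have haerr' : ∀ n, ∀ᵐ ω ∂μ, r' n ω * r n ω = 1 ∨ r' n ω * r n ω = -1 := by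
    intro n
    filter_upwards [haer n, haer' n] with ω h1 h2
    rcases h1 with h1 | h1 <;> rcases h2 with h2 | h2 <;> rw [h1, h2] <;> norm_num
  have key : ∀ N : ℕ, ∀ φ : (n : ℕ) → ({ m // m ∈ Finset.Ico 1 n } → ℝ) → X,
      (∫ ω, ‖∑ n ∈ Finset.Icc 1 N, r' n ω • φ n fun k => r k.1 ω‖ ^ p ∂μ)
        = ∫ ω, ‖∑ n ∈ Finset.Icc 1 N, (r' n ω * r n ω) • φ n fun k => r k.1 ω‖ ^ p ∂μ := by
    intro N φ
    set I : Finset ℕ := Finset.Icc 1 N with hI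
    set F : (ℕ → ℝ) → (ℕ → ℝ) → ℝ := fun a b =>
      ‖∑ n ∈ Finset.Icc 1 N, b n • φ n fun k => a k.1‖ ^ p with hF_def
    have hF : ∀ a a' b b', (∀ n ∈ I, a n = a' n) → (∀ n ∈ I, b n = b' n) →
        F a b = F a' b' := by
      intro a a' b b' ha hb
      have hsum : ∀ n ∈ Finset.Icc 1 N,
          b n • φ n (fun k => a k.1) = b' n • φ n (fun k => a' k.1) := by
        intro n hn
        have harg : (fun k : {m // m ∈ Finset.Ico 1 n} => a k.1)
            = fun k => a' k.1 := by
          funext k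
          refine ha k.1 ?_
          have hk' := Finset.mem_Ico.mp k.2
          have hn' := (Finset.mem_Icc.mp hn).2
          exact Finset.mem_Icc.mpr ⟨hk'.1, le_trans (le_of_lt hk'.2) hn'⟩
        rw [hb n hn, harg]
      show ‖∑ n ∈ Finset.Icc 1 N, b n • φ n fun k => a k.1‖ ^ p
          = ‖∑ n ∈ Finset.Icc 1 N, b' n • φ n fun k => a' k.1‖ ^ p
      rw [Finset.sum_congr rfl hsum]
    have hmeas1 : ∀ e d : ℕ → Bool,
        μ (⋂ n ∈ I, ({ω | r n ω = sg (e n)} ∩ {ω | r' n ω = sg (d n)}))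
          = 2⁻¹ ^ (2 * I.card) := fun e d => meas_atom μ hindep hdist I e d
    have hmeas2 : ∀ e d : ℕ → Bool,
        μ (⋂ n ∈ I, ({ω | r n ω = sg (e n)} ∩ {ω | r' n ω * r n ω = sg (d n)}))
          = 2⁻¹ ^ (2 * I.card) := by
      intro e d
      rw [twist I r r' e d]
      exact meas_atom μ hindep hdist I e (fun n => d n == e n)
    have h1 := integral_signs μ I r r' hur hur' hmeas1
      (fun n _ => haer n) (fun n _ => haer' n) F hF
    have h2 := integral_signs μ I r (fun n ω => r' n ω * r n ω) hur
      (fun n => (hur' n).mul (hur n)) hmeas2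
      (fun n _ => haer n) (fun n _ => haerr' n) F hF
    exact h1.trans h2.symm
  constructor
  · intro H N hN φ
    rw [← key N φ]
    exact H N hN φ
  · intro H N hN φ
    rw [key N φ]
    exact H N hN φ

end
end

section
/- Let X be an arbitrary Banach space, let (d_n)_{n≥1} be a martingale difference sequence of essentially bounded X-valued random variables, and let (e_n)_{n≥1} be a decoupled tangent sequence of (d_n). Then for every N ≥ 1, ess sup ‖Σ_{n=1}^N d_n‖ ≤ ess sup ‖Σ_{n=1}^N e_n‖; that is, the decoupling inequality holds for p = ∞ with constant 1 in every Banach space. -/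
open MeasureTheory ProbabilityTheory
open scoped ENNReal NNReal Classical

noncomputable section

/-- If the conditional expectation of the indicator of `{f ∈ B}` is nonpositive at `ω`,
then a.s. `f ω ∉ B`: equivalently, a.e. on `{f ∈ B}` the conditional expectation is
positive. -/
lemma aux_pos {Ω X : Type} [MeasurableSpace X] {mF m0 : MeasurableSpace Ω} (hm : mF ≤ m0)
    {μ : Measure Ω} [IsFiniteMeasure μ]
    {f : Ω → X} (hf : Measurable[m0] f) {B : Set X} (hB : MeasurableSet B) :
    ∀ᵐ ω ∂μ, f ω ∈ B → 0 < (μ[evInd f B | mF]) ω := by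
  classical
  have hindint : Integrable (evInd f B) μ :=
    (integrable_const (1 : ℝ)).indicator (hf hB)
  set g := μ[evInd f B | mF] with hg
  have hgnn : 0 ≤ᵐ[μ] g :=
    condExp_nonneg (Filter.Eventually.of_forall fun ω =>
      Set.indicator_nonneg (fun _ _ => zero_le_one) ω)
  have hSmF : MeasurableSet[mF] (g ⁻¹' Set.Iic 0) :=
    stronglyMeasurable_condExp.measurable measurableSet_Iic
  have hSm0 : MeasurableSet[m0] (g ⁻¹' Set.Iic 0) := hm _ hSmF
  have h1 : ∫ ω in g ⁻¹' Set.Iic 0, g ω ∂μ = ∫ ω in g ⁻¹' Set.Iic 0, evInd f B ω ∂μ :=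
    setIntegral_condExp hm hindint hSmF
  have h2 : ∫ ω in g ⁻¹' Set.Iic 0, g ω ∂μ = 0 := by
    have hz : g =ᵐ[μ.restrict (g ⁻¹' Set.Iic 0)] (fun _ => (0 : ℝ)) := by
      filter_upwards [ae_restrict_mem hSm0, ae_restrict_of_ae hgnn] with ω h0 h0'
      exact le_antisymm h0 h0'
    rw [integral_congr_ae hz]
    simp
  have h3 : ∫ ω in g ⁻¹' Set.Iic 0, evInd f B ω ∂μ
      = (μ (g ⁻¹' Set.Iic 0 ∩ f ⁻¹' B)).toReal := by
    simp only [evInd]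
    rw [setIntegral_indicator (hf hB), setIntegral_const, smul_eq_mul, mul_one]
    rfl
  have h4 : μ (g ⁻¹' Set.Iic 0 ∩ f ⁻¹' B) = 0 := by
    have h5 : (μ (g ⁻¹' Set.Iic 0 ∩ f ⁻¹' B)).toReal = 0 := by
      rw [← h3, ← h1, h2]
    exact ((ENNReal.toReal_eq_zero_iff _).mp h5).resolve_right (measure_ne_top μ _)
  rw [ae_iff]
  refine measure_mono_null ?_ h4
  intro ω hω
  simp only [Set.mem_setOf_eq, Classical.not_imp] at hω
  exact ⟨not_lt.mp hω.2, hω.1⟩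

/-- In an arbitrary Banach space `X`, for every martingale difference
sequence `(d n)` of essentially bounded random variables and every decoupled tangent
sequence `(e n)` of it, `ess sup ‖Σ_{n=1}^N d_n‖ ≤ ess sup ‖Σ_{n=1}^N e_n‖` for every
`N ≥ 1`: the decoupling inequality holds for `p = ∞` with constant `1`. -/
theorem decoupling_Linfty (X : Type) [NormedAddCommGroup X] [NormedSpace ℝ X]
    [CompleteSpace X] [MeasurableSpace X] [BorelSpace X]
    (Ω : Type) (m0 : MeasurableSpace Ω) (μ : Measure Ω) [IsProbabilityMeasure μ]
    (hμ : μ.IsComplete) (ℱ : Filtration ℕ m0) (d e : ℕ → Ω → X)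
    (hd : IsMDS μ ℱ d) (hbd : ∀ n, 1 ≤ n → MemLp (d n) ⊤ μ)
    (hde : IsDecoupledTangent μ ℱ d e) (N : ℕ) (hN : 1 ≤ N) :
    essSup (fun ω => (‖∑ n ∈ Finset.Icc 1 N, d n ω‖₊ : ℝ≥0∞)) μ
      ≤ essSup (fun ω => (‖∑ n ∈ Finset.Icc 1 N, e n ω‖₊ : ℝ≥0∞)) μ := by
  classical
  obtain ⟨hdSM, -, -⟩ := hd
  obtain ⟨heAd, htan, hCI⟩ := hde
  obtain ⟨𝒢, h𝒢le, hCI1, hCI2⟩ := hCI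
  have hm𝒢 : 𝒢 ≤ m0 := h𝒢le.trans (iSup_le fun n => ℱ.le n)
  set M := essSup (fun ω => (‖∑ n ∈ Finset.Icc 1 N, e n ω‖₊ : ℝ≥0∞)) μ with hMdef
  by_cases hMtop : M = ⊤
  · rw [hMtop]
    exact le_top
  set r := M.toReal with hr
  -- measurability
  have hdm : ∀ n, 1 ≤ n → Measurable[m0] (d n) := fun n hn =>
    ((hdSM n hn).mono (ℱ.le n)).measurable
  have hem : ∀ n, 1 ≤ n → Measurable[m0] (e n) := fun n hn =>
    ((heAd n hn).mono (ℱ.le n)).measurable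
  -- a countable set whose closure contains all values of the `d n`
  have hsepa : ∀ n : ℕ, ∃ c : Set X, c.Countable ∧ (1 ≤ n → Set.range (d n) ⊆ closure c) := by
    intro n
    by_cases hn : 1 ≤ n
    · obtain ⟨c, hc, hsub⟩ := ((hdSM n hn).mono (ℱ.le n)).isSeparable_range
      exact ⟨c, hc, fun _ => hsub⟩
    · exact ⟨∅, Set.countable_empty, fun h => absurd h hn⟩
  choose C hCc hCd using hsepa
  set D : Set X := insert 0 (⋃ n ∈ Finset.Icc 1 N, C n) with hDdef
  have hDc : D.Countable :=
    (Set.Countable.biUnion (Finset.Icc 1 N).countable_toSet fun n _ => hCc n).insert 0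
  have hD0 : (0 : X) ∈ D := Set.mem_insert _ _
  have hDd : ∀ n ∈ Finset.Icc 1 N, ∀ ω, d n ω ∈ closure D := by
    intro n hn ω
    refine closure_mono ?_ (hCd n (Finset.mem_Icc.mp hn).1 (Set.mem_range_self ω))
    exact fun x hx => Set.mem_insert_iff.mpr (Or.inr (Set.mem_biUnion hn hx))
  haveI : Countable ↥D := hDc.to_subtype
  haveI : Countable ((Fin (N + 1) → ↥D) × ℕ) := inferInstance
  -- the family of ball systems indexed by a countable type
  set A : ((Fin (N + 1) → ↥D) × ℕ) → ℕ → Set X := fun c i =>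
    if h : i < N + 1 then Metric.ball ((c.1 ⟨i, h⟩ : X)) (1 / ((c.2 : ℝ) + 1)) else Set.univ
    with hA
  have hAmeas : ∀ c i, MeasurableSet (A c i) := by
    intro c i
    simp only [hA]
    split
    · exact measurableSet_ball
    · exact MeasurableSet.univ
  set E : ((Fin (N + 1) → ↥D) × ℕ) → Set Ω :=
    fun c => {ω | ∀ n ∈ Finset.Icc 1 N, e n ω ∈ A c n} with hE
  -- Step 1: a.e., if `d n ω` lies in one of the balls then the corresponding
  -- conditional probability for `e n` (given 𝒢) is positive at ω.
  have hK1 : ∀ᵐ ω ∂μ, ∀ c : (Fin (N + 1) → ↥D) × ℕ, ∀ n : ℕ, n ∈ Finset.Icc 1 N →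
      (d n ω ∈ A c n → 0 < (μ[evInd (e n) (A c n) | 𝒢]) ω) := by
    rw [ae_all_iff]
    intro c
    rw [ae_all_iff]
    intro n
    by_cases hn : n ∈ Finset.Icc 1 N
    · have hn1 : 1 ≤ n := (Finset.mem_Icc.mp hn).1
      have h1 := aux_pos (μ := μ) (ℱ.le (n - 1)) (hdm n hn1) (hAmeas c n)
      have h2 := (htan n hn1 (A c n) (hAmeas c n)).trans (hCI1 n hn1 (A c n) (hAmeas c n))
      filter_upwards [h1, h2] with ω hω heq
      intro _ hdmem
      rw [← heq]
      exact hω hdmem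
    · filter_upwards with ω
      intro hn'
      exact absurd hn' hn
  -- Step 2: a.e., if all the conditional probabilities are positive at ω then the
  -- event that all `e n` lie in the prescribed balls has positive probability.
  have hK2 : ∀ᵐ ω ∂μ, ∀ c : (Fin (N + 1) → ↥D) × ℕ,
      ((∀ n ∈ Finset.Icc 1 N, 0 < (μ[evInd (e n) (A c n) | 𝒢]) ω) → μ (E c) ≠ 0) := by
    rw [ae_all_iff]
    intro c
    by_cases hEc : μ (E c) = 0
    · have hzero : (fun ω => ∏ i ∈ Finset.Icc 1 N, evInd (e i) (A c i) ω) =ᵐ[μ] (0 : Ω → ℝ) := by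
        filter_upwards [measure_eq_zero_iff_ae_notMem.mp hEc] with ω hω
        simp only [hE, Set.mem_setOf_eq, not_forall] at hω
        obtain ⟨n, hn, hnA⟩ := hω
        have hz : evInd (e n) (A c n) ω = 0 := by
          simp [evInd, Set.indicator_of_notMem, hnA]
        simp only [Pi.zero_apply]
        exact Finset.prod_eq_zero hn hz
      have hzero' : μ[(fun ω => ∏ i ∈ Finset.Icc 1 N, evInd (e i) (A c i) ω) | 𝒢]
          =ᵐ[μ] (0 : Ω → ℝ) := by
        have := condExp_congr_ae (m := 𝒢) (μ := μ) hzero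
        rwa [condExp_zero] at this
      have hcz : (fun ω => ∏ i ∈ Finset.Icc 1 N, (μ[evInd (e i) (A c i) | 𝒢]) ω)
          =ᵐ[μ] (0 : Ω → ℝ) := (hCI2 N hN (A c) (hAmeas c)).symm.trans hzero'
      filter_upwards [hcz] with ω hω hpos
      have hprod : 0 < ∏ i ∈ Finset.Icc 1 N, (μ[evInd (e i) (A c i) | 𝒢]) ω :=
        Finset.prod_pos hpos
      simp only [Pi.zero_apply] at hω
      rw [hω] at hprod
      exact absurd hprod (lt_irrefl 0)
    · filter_upwards with ω
      exact fun _ => hEc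
  -- the essential bound for the `e`-sum
  have hSe : ∀ᵐ ω ∂μ, ‖∑ n ∈ Finset.Icc 1 N, e n ω‖ ≤ r := by
    filter_upwards [ae_le_essSup (μ := μ)
      (f := fun ω => (‖∑ n ∈ Finset.Icc 1 N, e n ω‖₊ : ℝ≥0∞))] with ω hω
    have h := ENNReal.toReal_mono hMtop hω
    simpa using h
  have hSnull : μ {ω | ¬ ‖∑ n ∈ Finset.Icc 1 N, e n ω‖ ≤ r} = 0 := by
    simpa [ae_iff] using hSe
  -- main a.e. bound
  refine essSup_le_of_ae_le M ?_
  filter_upwards [hK1, hK2] with ω h1 h2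
  have hnorm : ‖∑ n ∈ Finset.Icc 1 N, d n ω‖ ≤ r := by
    have key : ∀ δ : ℝ, 0 < δ → ‖∑ n ∈ Finset.Icc 1 N, d n ω‖ ≤ r + δ := by
      intro δ hδ
      have hN' : (0 : ℝ) < (N : ℝ) := by exact_mod_cast hN
      obtain ⟨j, hj⟩ := exists_nat_one_div_lt (show (0 : ℝ) < δ / (2 * N) by positivity)
      set ε : ℝ := 1 / ((j : ℝ) + 1) with hε
      have hεpos : 0 < ε := by positivity
      -- choose centers in D close to the d n ω
      have hz : ∀ n : ℕ, ∃ z : ↥D, n ∈ Finset.Icc 1 N → dist (d n ω) (z : X) < ε := by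
        intro n
        by_cases hn : n ∈ Finset.Icc 1 N
        · obtain ⟨z, hzD, hzlt⟩ := Metric.mem_closure_iff.mp (hDd n hn ω) ε hεpos
          exact ⟨⟨z, hzD⟩, fun _ => hzlt⟩
        · exact ⟨⟨0, hD0⟩, fun hn' => absurd hn' hn⟩
      choose zf hzf using hz
      set c : (Fin (N + 1) → ↥D) × ℕ := (fun i => zf (i : ℕ), j) with hcdef
      have hAc : ∀ n : ℕ, n ∈ Finset.Icc 1 N →
          A c n = Metric.ball ((zf n : X)) ε := by
        intro n hn
        have hlt : n < N + 1 := Nat.lt_succ_of_le (Finset.mem_Icc.mp hn).2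
        simp only [hA, hcdef, dif_pos hlt, hε]
      have hdA : ∀ n ∈ Finset.Icc 1 N, d n ω ∈ A c n := by
        intro n hn
        rw [hAc n hn, Metric.mem_ball]
        exact hzf n hn
      have hpos : ∀ n ∈ Finset.Icc 1 N, 0 < (μ[evInd (e n) (A c n) | 𝒢]) ω :=
        fun n hn => h1 c n hn (hdA n hn)
      have hEne : μ (E c) ≠ 0 := h2 c hpos
      -- find a point in the event where additionally the `e`-sum is bounded by r
      have hnon : (E c ∩ {ω' | ‖∑ n ∈ Finset.Icc 1 N, e n ω'‖ ≤ r}).Nonempty := by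
        by_contra hempty
        rw [Set.not_nonempty_iff_eq_empty] at hempty
        apply hEne
        refine measure_mono_null (fun x hx => ?_) hSnull
        simp only [Set.mem_setOf_eq]
        intro hxr
        exact Set.eq_empty_iff_forall_notMem.mp hempty x ⟨hx, hxr⟩
      obtain ⟨ω', hω'E, hω'r⟩ := hnon
      have hterm : ∀ n ∈ Finset.Icc 1 N, ‖d n ω - e n ω'‖ ≤ 2 * ε := by
        intro n hn
        have he' : e n ω' ∈ A c n := hω'E n hn
        rw [hAc n hn, Metric.mem_ball] at he'
        have hd' : dist (d n ω) ((zf n : X)) < ε := hzf n hn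
        have htri : dist (d n ω) (e n ω') ≤
            dist (d n ω) ((zf n : X)) + dist (e n ω') ((zf n : X)) :=
          dist_triangle_right _ _ _
        rw [dist_eq_norm] at htri
        nlinarith [htri, hd', he']
      have hsum : ∑ n ∈ Finset.Icc 1 N, ‖d n ω - e n ω'‖ ≤ (N : ℝ) * (2 * ε) := by
        calc ∑ n ∈ Finset.Icc 1 N, ‖d n ω - e n ω'‖
            ≤ ∑ _n ∈ Finset.Icc 1 N, (2 * ε) := Finset.sum_le_sum hterm
          _ = ((Finset.Icc 1 N).card : ℝ) * (2 * ε) := by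
              rw [Finset.sum_const, nsmul_eq_mul]
          _ = (N : ℝ) * (2 * ε) := by
              rw [Nat.card_Icc]
              norm_num
      have hlast : (N : ℝ) * (2 * ε) < δ := by
        have hmul := mul_lt_mul_of_pos_left hj (show (0 : ℝ) < 2 * (N : ℝ) by positivity)
        have heq2 : 2 * (N : ℝ) * (δ / (2 * (N : ℝ))) = δ := by
          field_simp
        rw [heq2] at hmul
        calc (N : ℝ) * (2 * ε) = 2 * (N : ℝ) * (1 / ((j : ℝ) + 1)) := by rw [hε]; ring
          _ < δ := hmul
      calc ‖∑ n ∈ Finset.Icc 1 N, d n ω‖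
          = ‖(∑ n ∈ Finset.Icc 1 N, (d n ω - e n ω')) + ∑ n ∈ Finset.Icc 1 N, e n ω'‖ := by
            rw [← Finset.sum_add_distrib]
            simp
        _ ≤ ‖∑ n ∈ Finset.Icc 1 N, (d n ω - e n ω')‖ + ‖∑ n ∈ Finset.Icc 1 N, e n ω'‖ :=
            norm_add_le _ _
        _ ≤ (∑ n ∈ Finset.Icc 1 N, ‖d n ω - e n ω'‖) + r :=
            add_le_add (norm_sum_le _ _) hω'r
        _ ≤ (N : ℝ) * (2 * ε) + r := add_le_add_left hsum r
        _ ≤ r + δ := by linarith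
    by_contra hcon
    push_neg at hcon
    have := key ((‖∑ n ∈ Finset.Icc 1 N, d n ω‖ - r) / 2) (by linarith)
    linarith
  calc (‖∑ n ∈ Finset.Icc 1 N, d n ω‖₊ : ℝ≥0∞)
      = ENNReal.ofReal ‖∑ n ∈ Finset.Icc 1 N, d n ω‖ := (ofReal_norm (∑ n ∈ Finset.Icc 1 N, d n ω)).symm
    _ ≤ ENNReal.ofReal r := ENNReal.ofReal_le_ofReal hnorm
    _ = M := ENNReal.ofReal_toReal hMtop


end
end
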